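/- Let A and B be C*-algebras with A unital, and let T : A → B be a linear map such that for all a, b ∈ A, a b* = 1 implies T(a) T(b)* = T(1). Then T is continuous (bounded), and T(1) T(a) = T(a) for every a ∈ A. -/

import Mathlib

open Complex in
theorem aux_two_unitary {A : Type*} [CStarAlgebra A] [Nontrivial A]
    {x : A} (hx : IsSelfAdjoint x) (hx1 : ‖x‖ ≤ 1) :
    ∃ u : A, u * star u = 1 ∧ star u * u = 1 ∧ u + star u = x + x := by
  have hsn : IsStarNormal x := hx.isStarNormal
  set f : ℂ → ℂ := fun z => (z.re : ℂ) + (Real.sqrt (1 - z.re ^ 2) : ℂ) * Complex.I with hf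
  have hfc : Continuous f := by fun_prop
  have hspec : ∀ z ∈ spectrum ℂ x, z.re ^ 2 ≤ 1 := by
    intro z hz
    have h1 : ‖z‖ ≤ ‖x‖ := spectrum.norm_le_norm_of_mem hz
    have h2 : |z.re| ≤ ‖z‖ := Complex.abs_re_le_norm z
    nlinarith [abs_nonneg z.re, _root_.sq_abs z.re]
  have hu : cfc f x ∈ unitary A := by
    rw [cfc_unitary_iff f x hsn hfc.continuousOn]
    intro z hz
    have h2 : (0:ℝ) ≤ 1 - z.re ^ 2 := by linarith [hspec z hz]
    have hs : (Real.sqrt (1 - z.re ^ 2)) ^ 2 = 1 - z.re ^ 2 := Real.sq_sqrt h2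
    rw [Complex.ext_iff]
    simp only [hf, Complex.star_def, map_add, map_mul, Complex.conj_I, Complex.conj_ofReal]
    constructor <;> simp <;> nlinarith [hs]
  refine ⟨cfc f x, Unitary.mul_star_self_of_mem hu, Unitary.star_mul_self_of_mem hu, ?_⟩
  rw [← cfc_star f x, ← cfc_add x f _ hfc.continuousOn (by fun_prop)]
  have : cfc (fun z => f z + star (f z)) x = cfc (fun z : ℂ => z + z) x := by
    apply cfc_congr
    intro z hz
    have hre := hx.mem_spectrum_eq_re hz
    simp only [hf, Complex.star_def]
    rw [map_add, map_mul, Complex.conj_I, Complex.conj_ofReal, Complex.conj_ofReal]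
    rw [hre]
    simp only [Complex.ofReal_re]
    ring
  rw [this, cfc_add x _ _ (by fun_prop) (by fun_prop), cfc_id' ℂ x]

theorem stmt1 {A B : Type*}
    [NormedRing A] [StarRing A] [CStarRing A] [CompleteSpace A]
    [NormedAlgebra ℂ A] [StarModule ℂ A]
    [NonUnitalNormedRing B] [StarRing B] [CStarRing B] [CompleteSpace B]
    [NormedSpace ℂ B] [IsScalarTower ℂ B B] [SMulCommClass ℂ B B] [StarModule ℂ B]
    (T : A →ₗ[ℂ] B)
    (h : ∀ a b : A, a * star b = 1 → T a * star (T b) = T 1) :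
    Continuous T ∧ ∀ a : A, T 1 * T a = T a := by
  letI : CStarAlgebra A := { }
  obtain hA | hA := subsingleton_or_nontrivial A
  · have hT0 : ∀ a : A, T a = 0 := fun a => by
      rw [Subsingleton.elim a 0, map_zero]
    constructor
    · have : (T : A → B) = fun _ => 0 := funext hT0
      rw [this]; exact continuous_const
    · intro a; rw [hT0 a, hT0 1, mul_zero]
  set p := T 1 with hpdef
  have hp : p * star p = p := h 1 1 (by simp)
  have hps : star p = p := by
    have h2 := congrArg star hp
    rw [star_mul, star_star] at h2
    rw [← h2, hp]
  have hpp : p * p = p := by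
    nth_rewrite 2 [← hps]; exact hp
  have hpnorm : ‖p‖ ≤ 1 := by
    have : ‖p * star p‖ = ‖p‖ * ‖p‖ := CStarRing.norm_self_mul_star
    rw [hp] at this
    nlinarith [norm_nonneg p]
  -- for right-invertible-by-star u : norm bound and left identity
  have hTu : ∀ u : A, u * star u = 1 → ‖T u‖ ≤ 1 ∧ p * T u = T u := by
    intro u hu
    have hq : T u * star (T u) = p := h u u hu
    constructor
    · have h1 : ‖T u * star (T u)‖ = ‖T u‖ * ‖T u‖ := CStarRing.norm_self_mul_star
      rw [hq] at h1
      nlinarith [norm_nonneg (T u)]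
    · set s := p * T u - T u with hs
      have hzero : s * star s = 0 := by
        have hstars : star s = star (T u) * p - star (T u) := by
          rw [hs, star_sub, star_mul, hps]
        have expand : s * star s =
            p * (T u * star (T u)) * p - p * (T u * star (T u))
              - (T u * star (T u)) * p + T u * star (T u) := by
          rw [hs, hstars]; noncomm_ring
        rw [expand, hq, hpp, hpp]
        abel
      have : s = 0 := CStarRing.mul_star_self_eq_zero_iff s |>.mp hzero
      rw [hs, sub_eq_zero] at this
      exact this
  -- selfadjoint elements
  have hTsa : ∀ x : A, IsSelfAdjoint x → ‖T x‖ ≤ ‖x‖ ∧ p * T x = T x := by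
    intro x hx
    rcases eq_or_ne x 0 with rfl | hx0
    · simp
    have hxn : (0:ℝ) < ‖x‖ := norm_pos_iff.mpr hx0
    set x' : A := (‖x‖⁻¹ : ℂ) • x with hx'
    have hx'sa : IsSelfAdjoint x' := by
      rw [hx', IsSelfAdjoint, star_smul]
      rw [hx.star_eq]
      congr 1
      simp [Complex.ext_iff]
    have hx'norm : ‖x'‖ ≤ 1 := by
      rw [hx', norm_smul]
      simp [abs_of_nonneg, hxn.le, inv_mul_cancel₀ hxn.ne']
    obtain ⟨u, hu1, hu2, hu3⟩ := aux_two_unitary hx'sa hx'norm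
    have hu' : star u * star (star u) = 1 := by rwa [star_star]
    obtain ⟨hnu, hpu⟩ := hTu u hu1
    obtain ⟨hnu', hpu'⟩ := hTu (star u) hu'
    have hsum : T u + T (star u) = T x' + T x' := by
      rw [← map_add, ← map_add, hu3]
    have hTx' : ‖T x'‖ ≤ 1 := by
      have h2 : T x' + T x' = (2:ℂ) • T x' := (two_smul ℂ (T x')).symm
      have : ‖(2:ℂ) • T x'‖ ≤ 2 := by
        rw [← h2, ← hsum]
        calc ‖T u + T (star u)‖ ≤ ‖T u‖ + ‖T (star u)‖ := norm_add_le _ _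
          _ ≤ 2 := by linarith
      rw [norm_smul] at this
      simp only [Complex.norm_two] at this
      linarith
    have hxeq : x = (‖x‖ : ℂ) • x' := by
      rw [hx', smul_smul]
      rw [mul_inv_cancel₀ (by exact_mod_cast hxn.ne')]
      simp
    constructor
    · have hTxeq : T x = (‖x‖:ℂ) • T x' := by
        conv_lhs => rw [hxeq]
        rw [map_smul]
      rw [hTxeq, norm_smul]
      simp only [Complex.norm_of_nonneg hxn.le]
      nlinarith
    · have hpx' : p * T x' = T x' := by
        have h2 : p * (T x' + T x') = T x' + T x' := by
          rw [← hsum, mul_add, hpu, hpu']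
        have h3 : (2:ℂ) • (p * T x') = (2:ℂ) • T x' := by
          rw [two_smul, two_smul, ← mul_add, h2]
        exact smul_right_injective B two_ne_zero h3
      rw [hxeq, map_smul, mul_smul_comm, hpx']
  -- general
  have key : ∀ a : A, ‖T a‖ ≤ 2 * ‖a‖ ∧ p * T a = T a := by
    intro a
    have hdecomp : ((realPart a : A)) + Complex.I • ((imaginaryPart a : A)) = a :=
      realPart_add_I_smul_imaginaryPart a
    set x : A := (realPart a : A) with hxdef
    set y : A := (imaginaryPart a : A) with hydef
    have hxsa : IsSelfAdjoint x := (realPart a).2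
    have hysa : IsSelfAdjoint y := (imaginaryPart a).2
    have hxle : ‖x‖ ≤ ‖a‖ := by
      rw [hxdef, realPart_apply_coe]
      calc ‖(2:ℝ)⁻¹ • (a + star a)‖ = 2⁻¹ * ‖a + star a‖ := by
            rw [norm_smul]; norm_num
        _ ≤ 2⁻¹ * (‖a‖ + ‖star a‖) := by
            gcongr; exact norm_add_le _ _
        _ = ‖a‖ := by rw [norm_star]; ring
    have hyle : ‖y‖ ≤ ‖a‖ := by
      rw [hydef, imaginaryPart_apply_coe]
      calc ‖(-Complex.I) • ((2:ℝ)⁻¹ • (a - star a))‖ = ‖(2:ℝ)⁻¹ • (a - star a)‖ := by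
            rw [norm_smul]; simp
        _ = 2⁻¹ * ‖a - star a‖ := by rw [norm_smul]; norm_num
        _ ≤ 2⁻¹ * (‖a‖ + ‖star a‖) := by gcongr; exact norm_sub_le _ _
        _ = ‖a‖ := by rw [norm_star]; ring
    obtain ⟨hTx, hpx⟩ := hTsa x hxsa
    obtain ⟨hTy, hpy⟩ := hTsa y hysa
    have hTa : T a = T x + Complex.I • T y := by
      rw [← hdecomp, map_add, map_smul]
    constructor
    · rw [hTa]
      calc ‖T x + Complex.I • T y‖ ≤ ‖T x‖ + ‖Complex.I • T y‖ := norm_add_le _ _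
        _ = ‖T x‖ + ‖T y‖ := by rw [norm_smul]; simp
        _ ≤ 2 * ‖a‖ := by linarith
    · rw [hTa, mul_add, mul_smul_comm, hpx, hpy]
  constructor
  · exact AddMonoidHomClass.continuous_of_bound T 2 (fun a => (key a).1)
  · exact fun a => (key a).2
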